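/- Let n ≥ 1 and let A, B be symmetric n×n matrices over ℂ. Suppose (s₁,t₁), (s₂,t₂), (s₃,t₃) ∈ ℂ² are three pairwise linearly independent pairs, and set cᵢ = n − rank(sᵢ·A + tᵢ·B) for i = 1,2,3 (the corank of the i-th quadric in the pencil). If c₁ + c₂ + c₃ > n, then there exists a nonzero vector w ∈ ℂⁿ with A·w = 0 and B·w = 0; that is, all quadrics in the pencil spanned by A and B have the singular point [w] in common. -/

import Mathlib

open Module Submodule LinearMap Matrix

/-- From linear independence of two pairs, the 2×2 determinant is nonzero. -/
lemma det_ne_of_li {a b c d : ℂ}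
    (h : LinearIndependent ℂ ![(a, b), (c, d)]) : a * d - b * c ≠ 0 := by
  rw [LinearIndependent.pair_iff] at h
  intro hdet
  have h1 := h d (-b)
  simp only [Prod.smul_mk, smul_eq_mul, Prod.mk_add_mk, Prod.mk_eq_zero] at h1
  have hdb := h1 ⟨by linear_combination hdet, by ring⟩
  obtain ⟨hd0, hb0'⟩ := hdb
  have hb0 : b = 0 := neg_eq_zero.mp hb0'
  have h2 := h c (-a)
  simp only [Prod.smul_mk, smul_eq_mul, Prod.mk_add_mk, Prod.mk_eq_zero] at h2
  have hca := h2 ⟨by ring, by rw [hb0, hd0]; ring⟩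
  obtain ⟨hc0, ha0'⟩ := hca
  have ha0 : a = 0 := neg_eq_zero.mp ha0'
  have := h 1 0
  simp [ha0, hb0, hc0, hd0] at this

/-- For symmetric matrices with trivially intersecting kernels,
the ranges span everything. -/
lemma ranges_sup_top (n : ℕ) (M N : Matrix (Fin n) (Fin n) ℂ)
    (hM : M.IsSymm) (hN : N.IsSymm)
    (hk : LinearMap.ker M.mulVecLin ⊓ LinearMap.ker N.mulVecLin = ⊥) :
    LinearMap.range M.mulVecLin ⊔ LinearMap.range N.mulVecLin = ⊤ := by
  rw [← Subspace.dualAnnihilator_inj, Submodule.dualAnnihilator_top]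
  rw [Submodule.eq_bot_iff]
  intro f hf
  rw [Submodule.mem_dualAnnihilator] at hf
  set x : Fin n → ℂ := fun i => f (Pi.single i 1) with hx
  have hfy : ∀ y : Fin n → ℂ, f y = y ⬝ᵥ x := by
    intro y
    rw [LinearMap.pi_apply_eq_sum_univ f y, dotProduct]
    refine Finset.sum_congr rfl fun i _ => ?_
    rw [smul_eq_mul]
    congr 1
    have : (fun j => if i = j then (1:ℂ) else 0) = Pi.single i 1 := by
      ext j; simp [Pi.single_apply, eq_comm]
    rw [this]
  have key : ∀ P : Matrix (Fin n) (Fin n) ℂ, P.IsSymm →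
      LinearMap.range P.mulVecLin ≤ LinearMap.range M.mulVecLin ⊔ LinearMap.range N.mulVecLin →
      P.mulVec x = 0 := by
    intro P hP hle
    funext j
    have h0 : f (P.mulVec (Pi.single j 1)) = 0 := by
      apply hf
      apply hle
      exact ⟨Pi.single j 1, rfl⟩
    rw [hfy] at h0
    have : P.mulVec (Pi.single j 1) ⬝ᵥ x = (P.mulVec x) j := by
      rw [dotProduct_comm, Matrix.dotProduct_mulVec, ← Matrix.mulVec_transpose, hP.eq]
      simp [dotProduct_single]
    rw [this] at h0
    simpa using h0
  have hMx : M.mulVec x = 0 := key M hM le_sup_left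
  have hNx : N.mulVec x = 0 := key N hN le_sup_right
  have hx0 : x = 0 := by
    have : x ∈ LinearMap.ker M.mulVecLin ⊓ LinearMap.ker N.mulVecLin := by
      constructor <;> simpa [LinearMap.mem_ker, Matrix.mulVecLin_apply]
    rw [hk] at this
    simpa using this
  ext y
  simp [hfy, hx0]

theorem pencil_three_low_rank_common_singular_point
    (n : ℕ) (hn : 1 ≤ n) (A B : Matrix (Fin n) (Fin n) ℂ)
    (hA : A.IsSymm) (hB : B.IsSymm)
    (s t : Fin 3 → ℂ)
    (hpair : ∀ i j : Fin 3, i ≠ j → LinearIndependent ℂ ![(s i, t i), (s j, t j)])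
    (c : Fin 3 → ℕ)
    (hc : ∀ i : Fin 3, c i = n - (s i • A + t i • B).rank)
    (hsum : n < c 0 + c 1 + c 2) :
    ∃ w : Fin n → ℂ, w ≠ 0 ∧ A.mulVec w = 0 ∧ B.mulVec w = 0 := by
  -- the three matrices
  set M : Fin 3 → Matrix (Fin n) (Fin n) ℂ := fun i => s i • A + t i • B with hM
  have hMsymm : ∀ i, (M i).IsSymm := by
    intro i
    simp [hM, Matrix.IsSymm, Matrix.transpose_add, Matrix.transpose_smul, hA.eq, hB.eq]
  -- corank = finrank of kernel
  have hrn : ∀ i, (M i).rank + finrank ℂ (LinearMap.ker (M i).mulVecLin) = n := by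
    intro i
    have := LinearMap.finrank_range_add_finrank_ker (M i).mulVecLin
    simpa [Matrix.rank] using this
  have hck : ∀ i, c i = finrank ℂ (LinearMap.ker (M i).mulVecLin) := by
    intro i
    have h1 := hrn i
    have h2 : c i = n - (M i).rank := hc i
    omega
  -- from a vector in the kernel of two of the M i, derive the conclusion
  have solve : ∀ (i j : Fin 3), i ≠ j → ∀ w : Fin n → ℂ, w ≠ 0 →
      (M i).mulVec w = 0 → (M j).mulVec w = 0 →
      ∃ w : Fin n → ℂ, w ≠ 0 ∧ A.mulVec w = 0 ∧ B.mulVec w = 0 := by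
    intro i j hij w hw hi hj
    have hdet : s i * t j - t i * s j ≠ 0 := det_ne_of_li (hpair i j hij)
    refine ⟨w, hw, ?_, ?_⟩
    · funext k
      have e1 : s i * (A.mulVec w k) + t i * (B.mulVec w k) = 0 := by
        have := congrFun hi k
        simpa [hM, Matrix.add_mulVec, Matrix.smul_mulVec] using this
      have e2 : s j * (A.mulVec w k) + t j * (B.mulVec w k) = 0 := by
        have := congrFun hj k
        simpa [hM, Matrix.add_mulVec, Matrix.smul_mulVec] using this
      have : (s i * t j - t i * s j) * (A.mulVec w k) = 0 := by
        linear_combination t j * e1 - t i * e2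
      simpa [Pi.zero_apply] using (mul_eq_zero.mp this).resolve_left hdet
    · funext k
      have e1 : s i * (A.mulVec w k) + t i * (B.mulVec w k) = 0 := by
        have := congrFun hi k
        simpa [hM, Matrix.add_mulVec, Matrix.smul_mulVec] using this
      have e2 : s j * (A.mulVec w k) + t j * (B.mulVec w k) = 0 := by
        have := congrFun hj k
        simpa [hM, Matrix.add_mulVec, Matrix.smul_mulVec] using this
      have : (s i * t j - t i * s j) * (B.mulVec w k) = 0 := by
        linear_combination s i * e2 - s j * e1
      simpa [Pi.zero_apply] using (mul_eq_zero.mp this).resolve_left hdet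
  -- case split on ker M 0 ⊓ ker M 1
  by_cases hk : LinearMap.ker (M 0).mulVecLin ⊓ LinearMap.ker (M 1).mulVecLin = ⊥
  · exfalso
    -- express M 2 = α • M 0 + β • M 1 with α β ≠ 0
    have hd01 : s 0 * t 1 - t 0 * s 1 ≠ 0 := det_ne_of_li (hpair 0 1 (by decide))
    have hd21 : s 2 * t 1 - t 2 * s 1 ≠ 0 := det_ne_of_li (hpair 2 1 (by decide))
    have hd02 : s 0 * t 2 - t 0 * s 2 ≠ 0 := det_ne_of_li (hpair 0 2 (by decide))
    set d : ℂ := s 0 * t 1 - t 0 * s 1 with hd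
    set α : ℂ := (s 2 * t 1 - t 2 * s 1) / d with hα
    set β : ℂ := (s 0 * t 2 - t 0 * s 2) / d with hβ
    have hα0 : α ≠ 0 := div_ne_zero hd21 hd01
    have hβ0 : β ≠ 0 := div_ne_zero hd02 hd01
    have hs2 : s 2 = α * s 0 + β * s 1 := by
      rw [hα, hβ, div_mul_eq_mul_div, div_mul_eq_mul_div, ← add_div, eq_div_iff hd01, hd]; ring
    have ht2 : t 2 = α * t 0 + β * t 1 := by
      rw [hα, hβ, div_mul_eq_mul_div, div_mul_eq_mul_div, ← add_div, eq_div_iff hd01, hd]; ring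
    have hM2 : M 2 = α • M 0 + β • M 1 := by
      simp only [hM, hs2, ht2, add_smul, smul_add, smul_smul]
      abel
    -- injective map from ker(M 2) into range(M 0) ⊓ range(M 1)
    have hsup := ranges_sup_top n (M 0) (M 1) (hMsymm 0) (hMsymm 1) hk
    have hcomb : ∀ v : Fin n → ℂ, (M 2).mulVec v = 0 →
        α • (M 0).mulVec v + β • (M 1).mulVec v = 0 := by
      intro v hv
      rw [hM2] at hv
      simpa [Matrix.add_mulVec, Matrix.smul_mulVec] using hv
    set ψ : ↥(LinearMap.ker (M 2).mulVecLin) →ₗ[ℂ] (Fin n → ℂ) :=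
      (M 0).mulVecLin ∘ₗ (LinearMap.ker (M 2).mulVecLin).subtype with hψ
    have hψinj : Function.Injective ψ := by
      rw [← LinearMap.ker_eq_bot, Submodule.eq_bot_iff]
      intro w hw
      have h0 : (M 0).mulVec w.1 = 0 := hw
      have h1 : (M 1).mulVec w.1 = 0 := by
        have h' := hcomb w.1 w.2
        rw [h0] at h'
        simp only [smul_zero, zero_add] at h'
        exact (smul_eq_zero.mp h').resolve_left hβ0
      have hmem : w.1 ∈ LinearMap.ker (M 0).mulVecLin ⊓ LinearMap.ker (M 1).mulVecLin :=
        ⟨h0, h1⟩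
      rw [hk] at hmem
      exact Subtype.ext (by simpa using hmem)
    have hψrange : LinearMap.range ψ ≤
        LinearMap.range (M 0).mulVecLin ⊓ LinearMap.range (M 1).mulVecLin := by
      rintro y ⟨w, rfl⟩
      refine ⟨⟨w.1, rfl⟩, ⟨(-β/α) • w.1, ?_⟩⟩
      have h' := hcomb w.1 w.2
      have hβM : β • (M 1).mulVec w.1 = (-α) • (M 0).mulVec w.1 := by
        rw [neg_smul]
        exact eq_neg_of_add_eq_zero_right h'
      show (M 1).mulVec ((-β/α) • w.1) = ψ w
      have hψw : ψ w = (M 0).mulVec w.1 := rfl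
      rw [Matrix.mulVec_smul, hψw]
      have e1 : ((-β/α) : ℂ) • (M 1).mulVec w.1
          = ((-1)/α : ℂ) • (β • (M 1).mulVec w.1) := by
        rw [smul_smul]
        congr 1
        field_simp
      rw [e1, hβM, smul_smul]
      have e2 : ((-1)/α : ℂ) * (-α) = 1 := by field_simp
      rw [e2, one_smul]
    have hdim2 : finrank ℂ (LinearMap.ker (M 2).mulVecLin) ≤
        finrank ℂ ↥(LinearMap.range (M 0).mulVecLin ⊓ LinearMap.range (M 1).mulVecLin) := by
      rw [← LinearMap.finrank_range_of_inj hψinj]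
      exact Submodule.finrank_mono hψrange
    have hsupinf := Submodule.finrank_sup_add_finrank_inf_eq
      (LinearMap.range (M 0).mulVecLin) (LinearMap.range (M 1).mulVecLin)
    rw [hsup] at hsupinf
    have htop : finrank ℂ (⊤ : Submodule ℂ (Fin n → ℂ)) = n := by
      simp [finrank_top]
    rw [htop] at hsupinf
    have hr0 := hrn 0
    have hr1 := hrn 1
    have hk0 := hck 0
    have hk1 := hck 1
    have hk2 := hck 2
    have hrank0 : (M 0).rank = finrank ℂ (LinearMap.range (M 0).mulVecLin) := rfl
    have hrank1 : (M 1).rank = finrank ℂ (LinearMap.range (M 1).mulVecLin) := rfl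
    omega
  · -- nontrivial intersection: common kernel vector of M 0 and M 1
    rw [← ne_eq, Submodule.ne_bot_iff] at hk
    obtain ⟨w, ⟨hw0, hw1⟩, hwne⟩ := hk
    exact solve 0 1 (by decide) w hwne (by simpa using hw0) (by simpa using hw1)
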